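/- There is no interval Markov chain equivalent (under either IMC semantics) to the 2-state parametric Markov chain P with states s1 (labeled α, initial) and s0 (labeled β), one parameter x, and transitions p(s1)(s1) = 1−x, p(s1)(s0) = x, p(s0)(s0) = 1−x, p(s0)(s1) = x. In particular, the Markov chain instance with x = 3/4 satisfies P, but the Markov chain M₂ with p(s1)(s1)=1/4, p(s1)(s0)=3/4, p(s0)(s1)=1/3, p(s0)(s0)=2/3 does not satisfy P while it satisfies any IMC whose intervals contain all instances of P; hence no IMC has exactly (up to bisimilarity) the implementations of P. -/

import Mathlib

open Classical
noncomputable section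

structure MC (S : Type) (A : Type) where
  s0 : S
  p : S → S → ℝ
  nonneg : ∀ s s', 0 ≤ p s s'
  sum_one : ∀ s, ∑ᶠ s', p s s' = 1
  V : S → Set A

namespace MC

variable {S A : Type}

/-- Probability of a finite path (product of transition probabilities). -/
def pathProb (p : S → S → ℝ) : S → List S → ℝ
  | _, [] => 1
  | s, s' :: l => p s s' * pathProb p s' l

/-- `UntilPath φ ψ s l` : starting from `s`, the (nonempty) suffix `l` first reaches a
`ψ`-state at its last position, with `φ` holding at all strictly earlier positions after
the start. -/
inductive UntilPath (φ ψ : S → Prop) : S → List S → Prop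
  | single {s s' : S} (h : ψ s') : UntilPath φ ψ s [s']
  | cons {s s' : S} {l : List S} (hψ : ¬ ψ s') (hφ : φ s') (h : UntilPath φ ψ s' l) :
      UntilPath φ ψ s (s' :: l)

/-- `P_s(φ U ψ)` : first-passage sum over until-paths. -/
noncomputable def untilProb (p : S → S → ℝ) (φ ψ : S → Prop) (s : S) : ℝ :=
  ∑' l : {l : List S // UntilPath φ ψ s l}, pathProb p s l.1

/-- `P_s(◊ψ)` : probability of eventually reaching a `ψ`-state from `s`. -/
noncomputable def reachProb (p : S → S → ℝ) (ψ : S → Prop) (s : S) : ℝ :=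
  if ψ s then 1 else untilProb p (fun _ => True) ψ s

/-- `P^M(◊α)` : probability of eventually reaching a state labeled `α` from the initial
state of `M`. -/
noncomputable def Preach (M : MC S A) (α : Set A) : ℝ :=
  reachProb M.p (fun s => M.V s = α) M.s0

/-- Reachability via positive-probability transitions. -/
def Reaches (p : S → S → ℝ) : S → S → Prop :=
  Relation.ReflTransGen fun a b => 0 < p a b

end MC

/-- Interval Markov chain: each transition carries an interval `[Plo, Phi] ⊆ [0,1]`. -/
structure IMC (S : Type) (A : Type) where
  s0 : S
  Plo : S → S → ℝ
  Phi : S → S → ℝ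
  V : S → Set A

/-- Once-and-for-all satisfaction `M ⊨ᵒ I`. -/
def SatO {S A : Type} (M : MC S A) (I : IMC S A) : Prop :=
  M.s0 = I.s0 ∧ M.V = I.V ∧
    ∀ s, MC.Reaches M.p M.s0 s → ∀ s', M.p s s' ∈ Set.Icc (I.Plo s s') (I.Phi s s')

/-- `R` is an at-every-step satisfaction relation between `M` and `I`. -/
def IsSatRel {T S A : Type} (M : MC T A) (I : IMC S A) (R : T → S → Prop) : Prop :=
  R M.s0 I.s0 ∧
    ∀ t s, R t s → M.V t = I.V s ∧
      ∃ δ : T → S → ℝ,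
        (∀ t' s', 0 ≤ δ t' s') ∧
        (∀ t', 0 < M.p t t' → ∑ᶠ s', δ t' s' = 1) ∧
        (∀ s', (∑ᶠ t', M.p t t' * δ t' s') ∈ Set.Icc (I.Plo s s') (I.Phi s s')) ∧
        (∀ t' s', 0 < δ t' s' → R t' s')

/-- At-every-step satisfaction `M ⊨ᵃ I`. -/
def SatA {T S A : Type} (M : MC T A) (I : IMC S A) : Prop :=
  ∃ R, IsSatRel M I R

/-- `M` satisfies `I` with degree `n`. -/
def SatADeg {T S A : Type} (n : ℕ) (M : MC T A) (I : IMC S A) : Prop :=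
  ∃ R, IsSatRel M I R ∧ ∀ t, {s | R t s}.ncard ≤ n

/-- Combined transition function on the disjoint union of two Markov chains. -/
def sumP {S T A : Type} (M : MC S A) (N : MC T A) : S ⊕ T → S ⊕ T → ℝ
  | .inl a, .inl b => M.p a b
  | .inr a, .inr b => N.p a b
  | _, _ => 0

/-- Combined labelling on the disjoint union. -/
def sumV {S T A : Type} (M : MC S A) (N : MC T A) : S ⊕ T → Set A :=
  Sum.elim M.V N.V

/-- Probabilistic bisimilarity of two Markov chains. -/
def Bisimilar {S T A : Type} (M : MC S A) (N : MC T A) : Prop :=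
  ∃ B : (S ⊕ T) → (S ⊕ T) → Prop,
    Equivalence B ∧ B (Sum.inl M.s0) (Sum.inr N.s0) ∧
    ∀ a b, B a b → sumV M N a = sumV M N b ∧
      ∀ C : Set (S ⊕ T), (∀ x y, B x y → (x ∈ C ↔ y ∈ C)) →
        (∑ᶠ c ∈ C, sumP M N a c) = ∑ᶠ c ∈ C, sumP M N b c

/-- Transition function of the pMC `P` under the valuation `x`:
`p(s1)(s1) = 1 - x`, `p(s1)(s0) = x`, `p(s0)(s0) = 1 - x`, `p(s0)(s1) = x`. -/
def pP10 (x : ℝ) : Fin 2 → Fin 2 → ℝ := fun i j => if i = j then 1 - x else x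

/-- Labels: state `1` is labeled `α = univ` (initial), state `0` is labeled `β = ∅`. -/
def VP10 : Fin 2 → Set Unit := fun i => if i = 1 then Set.univ else ∅

/-- `N` is an instance of the pMC `P`. -/
def IsInst10 (N : MC (Fin 2) Unit) : Prop :=
  N.s0 = 1 ∧ N.V = VP10 ∧ ∃ x : ℝ, N.p = pP10 x

/-- Transition function of the Markov chain `M₂`. -/
def pM2 : Fin 2 → Fin 2 → ℝ := fun i j =>
  if i = 1 then (if j = 1 then 1 / 4 else 3 / 4)
  else (if j = 1 then 1 / 3 else 2 / 3)

/-- `I` is equivalent to the pMC `P` under the once-and-for-all IMC semantics. -/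
def EquivO10 {T : Type} (I : IMC T Unit) : Prop :=
  (∀ N : MC (Fin 2) Unit, IsInst10 N → ∃ M' : MC T Unit, SatO M' I ∧ Bisimilar N M') ∧
  (∀ M' : MC T Unit, SatO M' I → ∃ N : MC (Fin 2) Unit, IsInst10 N ∧ Bisimilar M' N)

/-- `I` is equivalent to the pMC `P` under the at-every-step IMC semantics. -/
def EquivA10 {T : Type} (I : IMC T Unit) : Prop :=
  (∀ N : MC (Fin 2) Unit, IsInst10 N → ∃ M' : MC T Unit, SatA M' I ∧ Bisimilar N M') ∧
  (∀ M' : MC T Unit, SatA M' I → ∃ N : MC (Fin 2) Unit, IsInst10 N ∧ Bisimilar M' N)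


/-! ### Auxiliary lemmas -/

section Aux

open MC Sum

lemma setUnit_cases (s : Set Unit) : s = ∅ ∨ s = Set.univ := by
  rcases Set.eq_empty_or_nonempty s with h | h
  · exact Or.inl h
  · refine Or.inr (Set.eq_univ_of_forall fun u => ?_)
    obtain ⟨v, hv⟩ := h
    cases u; cases v; exact hv

lemma unitUniv_ne_empty : (Set.univ : Set Unit) ≠ ∅ := by
  simp

/-- finsum over a set in a fintype as a full sum of an `ite`. -/
lemma fmem {γ : Type} [Fintype γ] (C : Set γ) (f : γ → ℝ) :
    ∑ᶠ c ∈ C, f c = ∑ c, if c ∈ C then f c else 0 := by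
  rw [finsum_mem_def, finsum_eq_sum_of_fintype]
  exact Finset.sum_congr rfl fun c _ => by simp [Set.indicator_apply]

lemma fmem_nonneg {γ : Type} [Fintype γ] (C : Set γ) (f : γ → ℝ)
    (hf : ∀ c, 0 ≤ f c) : 0 ≤ ∑ᶠ c ∈ C, f c := by
  rw [fmem]
  exact Finset.sum_nonneg fun c _ => by split <;> simp [hf c]

lemma fmem_pos_exists {γ : Type} [Fintype γ] (C : Set γ) (f : γ → ℝ)
    (hf : ∀ c, 0 ≤ f c) (h : 0 < ∑ᶠ c ∈ C, f c) : ∃ c ∈ C, 0 < f c := by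
  by_contra hc
  push_neg at hc
  have : ∑ᶠ c ∈ C, f c = 0 := by
    rw [fmem]
    refine Finset.sum_eq_zero fun c _ => ?_
    split
    · next hcC => exact le_antisymm (hc c hcC) (hf c)
    · rfl
  simp [this] at h

lemma sumP_nonneg {S T A : Type} (M : MC S A) (N : MC T A) (a b : S ⊕ T) :
    0 ≤ sumP M N a b := by
  cases a <;> cases b <;> simp [sumP, M.nonneg, N.nonneg]

/-- finsum over a subset of a sum type splits. -/
lemma fmem_sum_type {S T : Type} [Fintype S] [Fintype T] (C : Set (S ⊕ T)) (f : S ⊕ T → ℝ) :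
    ∑ᶠ c ∈ C, f c = (∑ᶠ s ∈ {s | Sum.inl s ∈ C}, f (Sum.inl s))
      + ∑ᶠ t ∈ {t | Sum.inr t ∈ C}, f (Sum.inr t) := by
  rw [fmem, fmem, fmem, Fintype.sum_sum_type]
  simp only [Set.mem_setOf_eq]

end Aux

section Bisim

open MC Sum

variable {S T A : Type}

lemma sumP_swap (M : MC S A) (N : MC T A) (a b : T ⊕ S) :
    sumP N M a b = sumP M N a.swap b.swap := by
  cases a <;> cases b <;> rfl

lemma sumV_swap (M : MC S A) (N : MC T A) (a : T ⊕ S) :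
    sumV N M a = sumV M N a.swap := by
  cases a <;> rfl

lemma Bisimilar.symm {M : MC S A} {N : MC T A} (h : Bisimilar M N) : Bisimilar N M := by
  obtain ⟨B, hE, h0, hstep⟩ := h
  refine ⟨fun a b => B a.swap b.swap, ⟨fun a => hE.refl _, fun h => hE.symm h,
    fun h h' => hE.trans h h'⟩, hE.symm h0, fun a b hab => ?_⟩
  constructor
  · rw [sumV_swap M N a, sumV_swap M N b]
    exact (hstep _ _ hab).1
  · intro C hC
    have hclosed : ∀ x y, B x y → (x ∈ Sum.swap '' C ↔ y ∈ Sum.swap '' C) := by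
      intro x y hxy
      have hmem : ∀ z : S ⊕ T, z ∈ Sum.swap '' C ↔ z.swap ∈ C := by
        intro z
        constructor
        · rintro ⟨c, hc, rfl⟩; rwa [Sum.swap_swap]
        · intro hz; exact ⟨z.swap, hz, Sum.swap_swap z⟩
      rw [hmem, hmem]
      apply hC
      simpa [Sum.swap_swap] using hxy
    have := (hstep _ _ hab).2 (Sum.swap '' C) hclosed
    have hinj : Set.InjOn Sum.swap C := fun x _ y _ hxy => by
      simpa [Sum.swap_swap] using congrArg Sum.swap hxy
    rw [finsum_mem_image hinj, finsum_mem_image hinj] at this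
    calc ∑ᶠ c ∈ C, sumP N M a c = ∑ᶠ c ∈ C, sumP M N a.swap c.swap :=
          finsum_mem_congr rfl fun c _ => sumP_swap M N a c
      _ = ∑ᶠ c ∈ C, sumP M N b.swap c.swap := this
      _ = ∑ᶠ c ∈ C, sumP N M b c := (finsum_mem_congr rfl fun c _ => (sumP_swap M N b c).symm)

end Bisim

section BisimMass

open MC Sum

lemma fmem_pos {γ : Type} [Fintype γ] (C : Set γ) (f : γ → ℝ)
    (hf : ∀ c, 0 ≤ f c) (c : γ) (hc : c ∈ C) (h : 0 < f c) : 0 < ∑ᶠ c ∈ C, f c := by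
  rw [fmem]
  refine Finset.sum_pos' (fun i _ => by split <;> simp [hf i]) ⟨c, Finset.mem_univ c, ?_⟩
  simp [hc, h]

variable {S T A : Type} [Fintype S] [Fintype T]

lemma rel_of_reaches (M : MC S A) (N : MC T A) (B : (S ⊕ T) → (S ⊕ T) → Prop)
    (hE : Equivalence B)
    (hstep : ∀ a b, B a b → sumV M N a = sumV M N b ∧
      ∀ C : Set (S ⊕ T), (∀ x y, B x y → (x ∈ C ↔ y ∈ C)) →
        (∑ᶠ c ∈ C, sumP M N a c) = ∑ᶠ c ∈ C, sumP M N b c)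
    {s₀ : S} {t₀ : T} (h0 : B (inl s₀) (inr t₀)) :
    ∀ s, Reaches M.p s₀ s → ∃ t, B (inl s) (inr t) := by
  intro s hs
  induction hs with
  | refl => exact ⟨t₀, h0⟩
  | @tail b c hab hbc ih =>
    obtain ⟨t, ht⟩ := ih
    set C : Set (S ⊕ T) := {d | B (inl c) d} with hC
    have hclosed : ∀ x y, B x y → (x ∈ C ↔ y ∈ C) :=
      fun x y hxy => ⟨fun hx => hE.trans hx hxy, fun hy => hE.trans hy (hE.symm hxy)⟩
    have htrans := (hstep _ _ ht).2 C hclosed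
    have hpos : 0 < ∑ᶠ d ∈ C, sumP M N (inl b) d :=
      fmem_pos _ _ (sumP_nonneg M N _) (inl c) (hE.refl _) hbc
    rw [htrans] at hpos
    obtain ⟨d, hdC, hd⟩ := fmem_pos_exists _ _ (sumP_nonneg M N _) hpos
    cases d with
    | inl s' => simp [sumP] at hd
    | inr t' => exact ⟨t', hdC⟩

/-- Mass analysis: if `M` (over `T`) is bisimilar to the pMC-instance `N` with
parameter `x`, then every reachable `α`-state of `M` sends mass `x` to `β`-states,
and every reachable `β`-state sends mass `x` to `α`-states. -/
lemma bisim_mass {T : Type} [Fintype T] (M : MC T Unit) (N : MC (Fin 2) Unit)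
    (hN0 : N.s0 = 1) (hNV : N.V = VP10) {x : ℝ} (hNp : N.p = pP10 x)
    (hb : Bisimilar M N) :
    ∀ t, Reaches M.p M.s0 t →
      (M.V t = Set.univ → ∑ᶠ u ∈ {u | M.V u = (∅ : Set Unit)}, M.p t u = x) ∧
      (M.V t = ∅ → ∑ᶠ u ∈ {u | M.V u = (Set.univ : Set Unit)}, M.p t u = x) := by
  obtain ⟨B, hE, h0, hstep⟩ := hb
  intro t ht
  obtain ⟨j, hj⟩ := rel_of_reaches M N B hE hstep h0 t ht
  have hlab : M.V t = N.V j := (hstep _ _ hj).1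
  -- mass transfer for a given label value L
  have key : ∀ L : Set Unit,
      ∑ᶠ u ∈ {u | M.V u = L}, M.p t u = ∑ᶠ i ∈ {i | N.V i = L}, N.p j i := by
    intro L
    set C : Set (T ⊕ Fin 2) := {d | sumV M N d = L} with hCdef
    have hclosed : ∀ a b, B a b → (a ∈ C ↔ b ∈ C) := by
      intro a b hab
      have := (hstep _ _ hab).1
      simp only [hCdef, Set.mem_setOf_eq, this]
    have htrans := (hstep _ _ hj).2 C hclosed
    rw [fmem_sum_type, fmem_sum_type] at htrans
    have e1 : ∀ (a : T ⊕ Fin 2), sumP M N (inl t) a =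
        match a with | inl u => M.p t u | inr _ => 0 := fun a => by cases a <;> rfl
    simpa [sumP, sumV, hCdef, C] using htrans
  constructor
  · intro hVt
    have hj1 : j = 1 := by
      rw [hlab, hNV] at hVt
      by_contra hne
      have : j = 0 := by omega
      rw [this] at hVt
      simp only [VP10] at hVt
      norm_num at hVt
      exact unitUniv_ne_empty hVt.symm
    rw [key ∅]
    have hset : {i | N.V i = (∅ : Set Unit)} = {(0 : Fin 2)} := by
      ext i
      simp only [Set.mem_setOf_eq, Set.mem_singleton_iff, hNV, VP10]
      constructor
      · intro h
        by_contra hne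
        have : i = 1 := by omega
        rw [this] at h
        norm_num at h
      · intro h; rw [h]; simp
    rw [hset, finsum_mem_singleton, hNp, hj1]
    simp [pP10]
  · intro hVt
    have hj0 : j = 0 := by
      rw [hlab, hNV] at hVt
      by_contra hne
      have : j = 1 := by omega
      rw [this] at hVt
      simp only [VP10] at hVt
      norm_num at hVt
    rw [key Set.univ]
    have hset : {i | N.V i = (Set.univ : Set Unit)} = {(1 : Fin 2)} := by
      ext i
      simp only [Set.mem_setOf_eq, Set.mem_singleton_iff, hNV, VP10]
      constructor
      · intro h
        by_contra hne
        have : i = 0 := by omega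
        rw [this] at h
        norm_num at h
        exact unitUniv_ne_empty h.symm
      · intro h; rw [h]; simp
    rw [hset, finsum_mem_singleton, hNp, hj0]
    simp [pP10]

end BisimMass

section Inst

open MC

/-- The instance of the pMC `P` with parameter `x ∈ [0,1]`. -/
def instN (x : ℝ) (h0 : 0 ≤ x) (h1 : x ≤ 1) : MC (Fin 2) Unit where
  s0 := 1
  p := pP10 x
  nonneg := by
    intro s s'
    simp only [pP10]
    split <;> linarith
  sum_one := by
    intro s
    rw [finsum_eq_sum_of_fintype, Fin.sum_univ_two]
    simp only [pP10]
    fin_cases s <;> norm_num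
  V := VP10

lemma instN_isInst (x : ℝ) (h0 : 0 ≤ x) (h1 : x ≤ 1) : IsInst10 (instN x h0 h1) :=
  ⟨rfl, rfl, x, rfl⟩

lemma satA_of_satO {T : Type} [Fintype T] (M : MC T Unit) (I : IMC T Unit)
    (h : SatO M I) : SatA M I := by
  obtain ⟨hs0, hV, hicc⟩ := h
  refine ⟨fun t s => t = s ∧ Reaches M.p M.s0 t, ⟨hs0, Relation.ReflTransGen.refl⟩,
    ?_⟩
  rintro t s ⟨rfl, hreach⟩
  refine ⟨by rw [hV], fun t' s' => if t' = s' ∧ Reaches M.p M.s0 t' then 1 else 0,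
    fun t' s' => by dsimp only; split <;> norm_num, ?_, ?_, ?_⟩
  · intro t' hp
    have hreach' : Reaches M.p M.s0 t' := hreach.tail hp
    rw [finsum_eq_single _ t' (fun b hb => by simp [hb.symm, Ne.symm hb])]
    simp [hreach']
  · intro s'
    rw [finsum_eq_single _ s' (fun b hb => by simp [hb])]
    by_cases hr : Reaches M.p M.s0 s'
    · simpa [hr] using hicc t hreach s'
    · have hzero : M.p t s' = 0 := by
        by_contra hne
        exact hr (hreach.tail (lt_of_le_of_ne (M.nonneg t s') (Ne.symm hne)))
      simp only [hr, and_false, if_false, mul_zero]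
      have := hicc t hreach s'
      rwa [hzero] at this
  · intro t' s' hpos
    dsimp only at hpos
    split at hpos
    · next h' => exact ⟨h'.1, h'.2⟩
    · norm_num at hpos

end Inst

section Good

open MC

/-- `W` is an o-implementation of `I` realizing parameter `x` at reachable states. -/
def GoodMC {T : Type} (I : IMC T Unit) (x : ℝ) (W : MC T Unit) : Prop :=
  SatO W I ∧ ∀ s, MC.Reaches W.p W.s0 s →
    (I.V s = Set.univ → ∑ᶠ u ∈ {u | I.V u = (∅ : Set Unit)}, W.p s u = x) ∧
    (I.V s = ∅ → ∑ᶠ u ∈ {u | I.V u = (Set.univ : Set Unit)}, W.p s u = x)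

lemma good_of_satO {T : Type} [Fintype T] (I : IMC T Unit) (x : ℝ)
    (M : MC T Unit) (N : MC (Fin 2) Unit)
    (hN0 : N.s0 = 1) (hNV : N.V = VP10) (hNp : N.p = pP10 x)
    (hsat : SatO M I) (hb : Bisimilar N M) : GoodMC I x M := by
  have hmass := bisim_mass M N hN0 hNV hNp hb.symm
  refine ⟨hsat, fun s hs => ?_⟩
  rw [← hsat.2.1]
  exact hmass s hs

end Good

section Push

open MC

lemma push_mass {T : Type} [Fintype T] (M : MC T Unit) (I : IMC T Unit) (R : T → T → Prop)
    (hlab : ∀ t' s', R t' s' → M.V t' = I.V s') (t : T) (δ : T → T → ℝ)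
    (hδ0 : ∀ t' s', 0 ≤ δ t' s')
    (hδ1 : ∀ t', 0 < M.p t t' → ∑ᶠ s', δ t' s' = 1)
    (hδR : ∀ t' s', 0 < δ t' s' → R t' s') (L : Set Unit) :
    ∑ᶠ u ∈ {u | I.V u = L}, (∑ᶠ t', M.p t t' * δ t' u)
      = ∑ᶠ u ∈ {u | M.V u = L}, M.p t u := by
  rw [fmem, fmem]
  have hδzero : ∀ t' u, M.V t' ≠ I.V u → δ t' u = 0 := by
    intro t' u hne
    by_contra h
    exact hne (hlab t' u (hδR t' u (lt_of_le_of_ne (hδ0 t' u) (Ne.symm h))))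
  calc ∑ u, (if I.V u = L then (∑ᶠ t', M.p t t' * δ t' u) else 0)
      = ∑ u, ∑ t', (if I.V u = L then M.p t t' * δ t' u else 0) := by
        refine Finset.sum_congr rfl fun u _ => ?_
        split
        · exact finsum_eq_sum_of_fintype _
        · simp
    _ = ∑ t', ∑ u, (if I.V u = L then M.p t t' * δ t' u else 0) := Finset.sum_comm
    _ = ∑ t', M.p t t' * ∑ u, (if I.V u = L then δ t' u else 0) := by
        refine Finset.sum_congr rfl fun t' _ => ?_
        rw [Finset.mul_sum]
        refine Finset.sum_congr rfl fun u _ => ?_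
        split <;> simp
    _ = ∑ t', (if M.V t' = L then M.p t t' else 0) := by
        refine Finset.sum_congr rfl fun t' _ => ?_
        rcases (M.nonneg t t').lt_or_eq with hp | hp
        · have hsum : ∑ u, δ t' u = 1 := by
            rw [← finsum_eq_sum_of_fintype]
            exact hδ1 t' hp
          by_cases hL : M.V t' = L
          · have : ∀ u, (if I.V u = L then δ t' u else 0) = δ t' u := by
              intro u
              split
              · rfl
              · next h => exact (hδzero t' u (by rw [hL]; exact fun hh => h hh.symm)).symm
            simp [this, hsum, hL]
          · have : ∀ u, (if I.V u = L then δ t' u else 0) = 0 := by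
              intro u
              split
              · next h => exact hδzero t' u (by rw [h]; exact hL)
              · rfl
            simp [this, hL]
        · simp [← hp]

lemma good_of_satA {T : Type} [Fintype T] (I : IMC T Unit) (x : ℝ)
    (M : MC T Unit) (N : MC (Fin 2) Unit)
    (hN0 : N.s0 = 1) (hNV : N.V = VP10) (hNp : N.p = pP10 x)
    (hsat : SatA M I) (hb : Bisimilar N M) : ∃ W : MC T Unit, GoodMC I x W := by
  obtain ⟨R, hR0, hRstep⟩ := hsat
  have hmass := bisim_mass M N hN0 hNV hNp hb.symm
  have hlab : ∀ t' s', R t' s' → M.V t' = I.V s' := fun t' s' h => (hRstep t' s' h).1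
  set G : T → Prop := fun s => ∃ t, Reaches M.p M.s0 t ∧ R t s with hGdef
  have step : ∀ s, G s → ∃ r : T → ℝ,
      (∀ s', 0 ≤ r s') ∧ (∑ᶠ s', r s' = 1) ∧
      (∀ s', r s' ∈ Set.Icc (I.Plo s s') (I.Phi s s')) ∧
      (∀ s', 0 < r s' → G s') ∧
      (I.V s = Set.univ → ∑ᶠ u ∈ {u | I.V u = (∅ : Set Unit)}, r u = x) ∧
      (I.V s = ∅ → ∑ᶠ u ∈ {u | I.V u = (Set.univ : Set Unit)}, r u = x) := by
    rintro s ⟨t, hreach, hRts⟩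
    obtain ⟨hVts, δ, hδ0, hδ1, hicc, hδR⟩ := hRstep t s hRts
    refine ⟨fun u => ∑ᶠ t', M.p t t' * δ t' u,
      fun s' => finsum_nonneg fun t' => mul_nonneg (M.nonneg t t') (hδ0 t' s'), ?_,
      hicc, ?_, ?_, ?_⟩
    · -- rows sum to one
      rw [finsum_eq_sum_of_fintype]
      calc ∑ u, ∑ᶠ t', M.p t t' * δ t' u
          = ∑ u, ∑ t', M.p t t' * δ t' u :=
            Finset.sum_congr rfl fun u _ => finsum_eq_sum_of_fintype _
        _ = ∑ t', ∑ u, M.p t t' * δ t' u := Finset.sum_comm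
        _ = ∑ t', M.p t t' * ∑ u, δ t' u := by
            refine Finset.sum_congr rfl fun t' _ => (Finset.mul_sum _ _ _).symm
        _ = ∑ t', M.p t t' := by
            refine Finset.sum_congr rfl fun t' _ => ?_
            rcases (M.nonneg t t').lt_or_eq with hp | hp
            · rw [← finsum_eq_sum_of_fintype, hδ1 t' hp, mul_one]
            · simp [← hp]
        _ = 1 := by rw [← finsum_eq_sum_of_fintype]; exact M.sum_one t
    · -- successors are good
      intro s' hpos
      dsimp only at hpos
      rw [finsum_eq_sum_of_fintype] at hpos
      obtain ⟨t', _, hne⟩ := Finset.exists_ne_zero_of_sum_ne_zero hpos.ne'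
      have h1 : M.p t t' ≠ 0 := fun h => hne (by simp [h])
      have h2 : δ t' s' ≠ 0 := fun h => hne (by simp [h])
      exact ⟨t', hreach.tail (lt_of_le_of_ne (M.nonneg t t') (Ne.symm h1)),
        hδR t' s' (lt_of_le_of_ne (hδ0 t' s') (Ne.symm h2))⟩
    · intro hVs
      rw [push_mass M I R hlab t δ hδ0 hδ1 hδR ∅]
      exact (hmass t hreach).1 (hVts.trans hVs)
    · intro hVs
      rw [push_mass M I R hlab t δ hδ0 hδ1 hδR Set.univ]
      exact (hmass t hreach).2 (hVts.trans hVs)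
  choose r hr using step
  set pfun : T → T → ℝ :=
    fun s u => if h : G s then r s h u else if u = s then 1 else 0 with hpdef
  have hpnn : ∀ s u, 0 ≤ pfun s u := by
    intro s u
    by_cases h : G s
    · simp only [hpdef, dif_pos h]
      exact (hr s h).1 u
    · simp only [hpdef, dif_neg h]
      split <;> norm_num
  have hpsum : ∀ s, ∑ᶠ u, pfun s u = 1 := by
    intro s
    by_cases h : G s
    · simp only [hpdef, dif_pos h]
      exact (hr s h).2.1
    · simp only [hpdef, dif_neg h]
      rw [finsum_eq_single _ s (fun b hb => by simp [hb])]
      simp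
  refine ⟨⟨I.s0, pfun, hpnn, hpsum, I.V⟩, ?_, ?_⟩
  all_goals {
    have hGreach : ∀ s, Reaches pfun I.s0 s → G s := by
      intro s hs
      induction hs with
      | refl => exact ⟨M.s0, Relation.ReflTransGen.refl, hR0⟩
      | @tail b c hab hbc ih =>
        by_cases h : G b
        · simp only [hpdef, dif_pos h] at hbc
          exact (hr b h).2.2.2.1 c hbc
        · simp only [hpdef, dif_neg h] at hbc
          exact absurd ih h
    first
    | exact ⟨rfl, rfl, fun s hs s' => by
        have h := hGreach s hs
        simp only [hpdef, dif_pos h]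
        exact (hr s h).2.2.1 s'⟩
    | exact fun s hs => by
        have h := hGreach s hs
        constructor
        · intro hVs
          simp only [hpdef, dif_pos h]
          exact (hr s h).2.2.2.2.1 hVs
        · intro hVs
          simp only [hpdef, dif_pos h]
          exact (hr s h).2.2.2.2.2 hVs
  }

lemma main_contra {T : Type} [Fintype T] (I : IMC T Unit)
    (hfwd : ∀ x : ℝ, x ∈ Set.Ioo (0 : ℝ) 1 → ∃ W : MC T Unit, GoodMC I x W)
    (hbwd : ∀ M' : MC T Unit, SatO M' I →
      ∃ N : MC (Fin 2) Unit, IsInst10 N ∧ Bisimilar M' N) : False := by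
  haveI : Infinite ↑(Set.Ioo (0 : ℝ) 1) := Set.Ioo.infinite (by norm_num)
  choose W hW using fun z : ↑(Set.Ioo (0 : ℝ) 1) => hfwd z.1 z.2
  obtain ⟨a, b, hab, hfab⟩ := Finite.exists_ne_map_eq_of_infinite
    (fun z => ({q | 0 < (W z).p q.1 q.2} : Set (T × T)))
  have hsupp : ∀ s u, 0 < (W a).p s u ↔ 0 < (W b).p s u := by
    intro s u
    have := Set.ext_iff.mp hfab (s, u)
    simpa using this
  have hs0a : (W a).s0 = I.s0 := (hW a).1.1
  have hs0b : (W b).s0 = I.s0 := (hW b).1.1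
  set pmix : T → T → ℝ :=
    fun s u => if I.V s = Set.univ then (W a).p s u else (W b).p s u with hpm
  have hmixa : ∀ s u, 0 < pmix s u ↔ 0 < (W a).p s u := by
    intro s u
    simp only [hpm]
    split
    · exact Iff.rfl
    · exact (hsupp s u).symm
  have hreachA : ∀ s, Relation.ReflTransGen (fun v w => 0 < pmix v w) I.s0 s →
      Reaches (W a).p (W a).s0 s := by
    intro s hs
    rw [hs0a]
    induction hs with
    | refl => exact Relation.ReflTransGen.refl
    | @tail v w hvw hpos ih => exact ih.tail ((hmixa v w).1 hpos)
  have hreachB : ∀ s, Relation.ReflTransGen (fun v w => 0 < pmix v w) I.s0 s →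
      Reaches (W b).p (W b).s0 s := by
    intro s hs
    rw [hs0b]
    induction hs with
    | refl => exact Relation.ReflTransGen.refl
    | @tail v w hvw hpos ih => exact ih.tail ((hsupp v w).1 ((hmixa v w).1 hpos))
  have hmnn : ∀ s u, 0 ≤ pmix s u := by
    intro s u
    simp only [hpm]
    split
    · exact (W a).nonneg s u
    · exact (W b).nonneg s u
  have hmsum : ∀ s, ∑ᶠ u, pmix s u = 1 := by
    intro s
    simp only [hpm]
    split
    · exact (W a).sum_one s
    · exact (W b).sum_one s
  set Wm : MC T Unit := ⟨I.s0, pmix, hmnn, hmsum, I.V⟩ with hWm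
  have hsat : SatO Wm I := by
    refine ⟨rfl, rfl, fun s hs u => ?_⟩
    show pmix s u ∈ _
    by_cases h : I.V s = Set.univ
    · rw [hpm]
      simp only [if_pos h]
      exact (hW a).1.2.2 s (hreachA s hs) u
    · rw [hpm]
      simp only [if_neg h]
      exact (hW b).1.2.2 s (hreachB s hs) u
  obtain ⟨Nz, ⟨hNs0, hNV, z, hNp⟩, hbis⟩ := hbwd Wm hsat
  have hmassm := bisim_mass Wm Nz hNs0 hNV hNp hbis
  -- the initial state is labeled α
  have hlab0 : I.V I.s0 = Set.univ := by
    obtain ⟨B, hE, h0, hstep⟩ := hbis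
    have := (hstep _ _ h0).1
    simp only [sumV, Sum.elim_inl, Sum.elim_inr] at this
    rw [hNV, hNs0] at this
    simpa [VP10] using this
  -- z equals a
  have hrow0 : pmix I.s0 = (W a).p I.s0 := by
    simp only [hpm, if_pos hlab0]
  have hmass_a : ∑ᶠ u ∈ {u | I.V u = (∅ : Set Unit)}, pmix I.s0 u = a.1 := by
    rw [show ∑ᶠ u ∈ {u | I.V u = (∅ : Set Unit)}, pmix I.s0 u
        = ∑ᶠ u ∈ {u | I.V u = (∅ : Set Unit)}, (W a).p I.s0 u from
      finsum_mem_congr rfl fun u _ => by rw [hrow0]]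
    exact ((hW a).2 I.s0 (hs0a ▸ Relation.ReflTransGen.refl)).1 hlab0
  have hmass_z : ∑ᶠ u ∈ {u | I.V u = (∅ : Set Unit)}, pmix I.s0 u = z :=
    (hmassm I.s0 Relation.ReflTransGen.refl).1 hlab0
  have hza : z = a.1 := by rw [← hmass_z, hmass_a]
  -- find a reachable β-state
  have hapos : (0 : ℝ) < a.1 := a.2.1
  obtain ⟨c, hcB, hcpos⟩ := fmem_pos_exists {u | I.V u = (∅ : Set Unit)}
    (pmix I.s0) (hmnn I.s0) (by rw [hmass_a]; exact hapos)
  have hcreach : Relation.ReflTransGen (fun v w => 0 < pmix v w) I.s0 c :=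
    Relation.ReflTransGen.single hcpos
  have hcV : I.V c = ∅ := hcB
  have hcne : ¬ I.V c = Set.univ := by
    rw [hcV]; exact fun h => unitUniv_ne_empty h.symm
  have hrowc : pmix c = (W b).p c := by
    funext u
    simp only [hpm, if_neg hcne]
  have hmass_b : ∑ᶠ u ∈ {u | I.V u = (Set.univ : Set Unit)}, pmix c u = b.1 := by
    rw [show ∑ᶠ u ∈ {u | I.V u = (Set.univ : Set Unit)}, pmix c u
        = ∑ᶠ u ∈ {u | I.V u = (Set.univ : Set Unit)}, (W b).p c u from
      finsum_mem_congr rfl fun u _ => by rw [hrowc]]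
    exact ((hW b).2 c (hreachB c hcreach)).2 hcV
  have hmass_z' : ∑ᶠ u ∈ {u | I.V u = (Set.univ : Set Unit)}, pmix c u = z :=
    (hmassm c hcreach).2 hcV
  have hzb : z = b.1 := by rw [← hmass_z', hmass_b]
  exact hab (Subtype.ext (by rw [← hza, ← hzb]))
end Push
/-- the instance with `x = 3/4` satisfies `P`; the MC `M₂` does not
satisfy `P` yet satisfies every IMC (over the same states) whose intervals contain all
instances of `P`; hence no IMC is equivalent to `P` under either semantics. -/
theorem stmt10 :
    (∃ N : MC (Fin 2) Unit, IsInst10 N ∧ N.p = pP10 (3 / 4)) ∧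
    (∃ M₂ : MC (Fin 2) Unit, M₂.s0 = 1 ∧ M₂.V = VP10 ∧ M₂.p = pM2 ∧
      ¬ IsInst10 M₂ ∧
      ∀ I : IMC (Fin 2) Unit, I.s0 = 1 → I.V = VP10 →
        (∀ N, IsInst10 N → SatO N I) → SatO M₂ I) ∧
    (∀ (T : Type) (_ : Finite T) (I : IMC T Unit), ¬ EquivO10 I ∧ ¬ EquivA10 I) := by

  classical
  refine ⟨⟨instN (3/4) (by norm_num) (by norm_num), instN_isInst _ _ _, rfl⟩, ?_, ?_⟩
  · -- Part 2
    refine ⟨⟨1, pM2, ?_, ?_, VP10⟩, rfl, rfl, rfl, ?_, ?_⟩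
    · intro s s'
      simp only [pM2]
      split <;> split <;> norm_num
    · intro s
      rw [finsum_eq_sum_of_fintype, Fin.sum_univ_two]
      simp only [pM2]
      fin_cases s <;> norm_num
    · rintro ⟨-, -, x, hp⟩
      have h1 := congrFun (congrFun hp 1) 1
      have h2 := congrFun (congrFun hp 0) 1
      simp only [pM2, pP10] at h1 h2
      norm_num at h1 h2
      rw [← h2] at h1
      norm_num at h1
    · intro I hs0 hV hall
      have hA := hall _ (instN_isInst (3/4) (by norm_num) (by norm_num))
      have hB := hall _ (instN_isInst (1/3) (by norm_num) (by norm_num))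
      have hreachA1 : MC.Reaches (instN (3/4) (by norm_num) (by norm_num)).p
          (instN (3/4) (by norm_num) (by norm_num)).s0 1 := Relation.ReflTransGen.refl
      have hreachA0 : MC.Reaches (instN (3/4) (by norm_num) (by norm_num)).p
          (instN (3/4) (by norm_num) (by norm_num)).s0 0 :=
        Relation.ReflTransGen.single (by show (0:ℝ) < pP10 (3/4) 1 0; norm_num [pP10])
      have hreachB1 : MC.Reaches (instN (1/3) (by norm_num) (by norm_num)).p
          (instN (1/3) (by norm_num) (by norm_num)).s0 1 := Relation.ReflTransGen.refl
      have hreachB0 : MC.Reaches (instN (1/3) (by norm_num) (by norm_num)).p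
          (instN (1/3) (by norm_num) (by norm_num)).s0 0 :=
        Relation.ReflTransGen.single (by show (0:ℝ) < pP10 (1/3) 1 0; norm_num [pP10])
      refine ⟨hs0.symm, hV.symm, fun s _ s' => ?_⟩
      show pM2 s s' ∈ _
      have hc : s = 0 ∨ s = 1 := by omega
      have hc' : s' = 0 ∨ s' = 1 := by omega
      rcases hc with rfl | rfl <;> rcases hc' with rfl | rfl
      · have h := hB.2.2 0 hreachB0 0
        have he : pM2 0 0 = pP10 (1/3 : ℝ) 0 0 := by norm_num [pM2, pP10]
        rw [he]
        exact h
      · have h := hB.2.2 0 hreachB0 1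
        have he : pM2 0 1 = pP10 (1/3 : ℝ) 0 1 := by norm_num [pM2, pP10]
        rw [he]
        exact h
      · have h := hA.2.2 1 hreachA1 0
        have he : pM2 1 0 = pP10 (3/4 : ℝ) 1 0 := by norm_num [pM2, pP10]
        rw [he]
        exact h
      · have h := hA.2.2 1 hreachA1 1
        have he : pM2 1 1 = pP10 (3/4 : ℝ) 1 1 := by norm_num [pM2, pP10]
        rw [he]
        exact h
  · -- Part 3
    intro T hfin I
    haveI : Fintype T := Fintype.ofFinite T
    constructor
    · rintro ⟨hfwd, hbwd⟩
      refine main_contra I (fun x hx => ?_) hbwd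
      obtain ⟨M', hsat, hbis⟩ :=
        hfwd (instN x hx.1.le hx.2.le) (instN_isInst x hx.1.le hx.2.le)
      exact ⟨M', good_of_satO I x M' _ rfl rfl rfl hsat hbis⟩
    · rintro ⟨hfwd, hbwd⟩
      refine main_contra I (fun x hx => ?_) (fun M' hs => hbwd M' (satA_of_satO M' I hs))
      obtain ⟨M', hsat, hbis⟩ :=
        hfwd (instN x hx.1.le hx.2.le) (instN_isInst x hx.1.le hx.2.le)
      exact good_of_satA I x M' _ rfl rfl rfl hsat hbis
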